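/- Set unification rule for nonempty sets: insert a A = insert b B if and only if (a = b ∧ A = B) ∨ (a = b ∧ insert a A = B) ∨ (a = b ∧ A = insert b B) ∨ (∃ N, A = insert b N ∧ B = insert a N). -/
import Mathlib

theorem stmt9 {α : Type*} (a b : α) (A B : Set α) :
    insert a A = insert b B ↔
      (a = b ∧ A = B) ∨ (a = b ∧ insert a A = B) ∨ (a = b ∧ A = insert b B) ∨
      (∃ N : Set α, A = insert b N ∧ B = insert a N) := by
  constructor
  · intro h
    by_cases hab : a = b
    · subst hab
      by_cases hB : a ∈ B
      · right; left
        refine ⟨rfl, ?_⟩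
        rw [h, Set.insert_eq_self.mpr hB]
      · by_cases hA : a ∈ A
        · right; right; left
          refine ⟨rfl, ?_⟩
          rw [← h, Set.insert_eq_self.mpr hA]
        · left
          refine ⟨rfl, ?_⟩
          ext x
          constructor
          · intro hx
            have : x ∈ insert a B := h ▸ Set.mem_insert_of_mem a hx
            rcases this with rfl | hx'
            · exact absurd hx hA
            · exact hx'
          · intro hx
            have : x ∈ insert a A := h ▸ Set.mem_insert_of_mem a hx
            rcases this with rfl | hx'
            · exact absurd hx hB
            · exact hx'
    · right; right; right
      refine ⟨A ∩ B, ?_, ?_⟩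
      · have hbA : b ∈ A := by
          have : b ∈ insert a A := h ▸ Set.mem_insert b B
          rcases this with h' | h'
          · exact absurd h'.symm hab
          · exact h'
        ext x
        constructor
        · intro hx
          by_cases hxb : x = b
          · subst hxb; exact Set.mem_insert x _
          · have : x ∈ insert b B := h ▸ Set.mem_insert_of_mem a hx
            rcases this with rfl | hx'
            · exact absurd rfl hxb
            · exact Set.mem_insert_of_mem b ⟨hx, hx'⟩
        · intro hx
          rcases hx with rfl | hx
          · exact hbA
          · exact hx.1
      · have haB : a ∈ B := by
          have : a ∈ insert b B := h ▸ Set.mem_insert a A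
          rcases this with h' | h'
          · exact absurd h' hab
          · exact h'
        ext x
        constructor
        · intro hx
          by_cases hxa : x = a
          · subst hxa; exact Set.mem_insert x _
          · have : x ∈ insert a A := h ▸ Set.mem_insert_of_mem b hx
            rcases this with rfl | hx'
            · exact absurd rfl hxa
            · exact Set.mem_insert_of_mem a ⟨hx', hx⟩
        · intro hx
          rcases hx with rfl | hx
          · exact haB
          · exact hx.2
  · rintro (⟨rfl, rfl⟩ | ⟨rfl, h⟩ | ⟨rfl, h⟩ | ⟨N, rfl, rfl⟩)
    · rfl
    · rw [← h, Set.insert_idem]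
    · rw [h, Set.insert_idem]
    · exact Set.insert_comm a b N
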